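/- For every r > 0 there exist p ∈ (0,1) and β ∈ (0,1) such that H(β) + r·log₂( p·(1 − (1−β)³) + (1−p)·(7/8) ) > 0, where H(β) = −β·log₂ β − (1−β)·log₂(1−β) is the binary entropy function. -/
import Mathlib


/-- The binary entropy function `H(β) = -β log₂ β - (1-β) log₂ (1-β)`. -/
noncomputable def binH (β : ℝ) : ℝ :=
  -β * Real.logb 2 β - (1 - β) * Real.logb 2 (1 - β)

/-- For every `r > 0` there exist `p ∈ (0,1)` and `β ∈ (0,1)` such that
`H(β) + r log₂( p (1 - (1-β)³) + (1-p) (7/8) ) > 0`. -/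
theorem exists_bias_first_moment_positive (r : ℝ) (hr : 0 < r) :
    ∃ p ∈ Set.Ioo (0 : ℝ) 1, ∃ β ∈ Set.Ioo (0 : ℝ) 1,
      0 < binH β + r * Real.logb 2 (p * (1 - (1 - β) ^ 3) + (1 - p) * (7 / 8)) := by
  set ε : ℝ := Real.exp (-(r/3 + 2)) with hεdef
  have hε0 : 0 < ε := Real.exp_pos _
  have hε4 : ε < 1/4 := by
    have h1 : ε ≤ Real.exp (-2) := by
      apply Real.exp_le_exp.2; linarith
    have h2 : Real.exp (-2) < 1/4 := by
      have he : Real.exp 1 > 2.7182818283 := Real.exp_one_gt_d9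
      have h3 : Real.exp (-2) * Real.exp 2 = 1 := by
        rw [← Real.exp_add]; norm_num
      have h4 : Real.exp 2 = Real.exp 1 * Real.exp 1 := by
        rw [← Real.exp_add]; norm_num
      nlinarith [Real.exp_pos (-2)]
    linarith
  have hlogε : Real.log ε = -(r/3 + 2) := Real.log_exp _
  refine ⟨1 - ε, ⟨by linarith, by linarith⟩, 1 - ε, ⟨by linarith, by linarith⟩, ?_⟩
  set A : ℝ := (1 - ε) * (1 - (1 - (1 - ε)) ^ 3) + (1 - (1 - ε)) * (7 / 8) with hAdef
  have hA : A = 1 - ε/8 - ε^3 + ε^4 := by rw [hAdef]; ring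
  have hApos : (3:ℝ)/4 ≤ A := by rw [hA]; nlinarith [hε0, hε4, sq_nonneg ε, pow_pos hε0 3]
  have hAone : 1 ≤ A * (1 + ε/3) := by rw [hA]; nlinarith [hε0, hε4, pow_pos hε0 2, pow_pos hε0 3, pow_pos hε0 4, mul_pos (pow_pos hε0 3) hε0]
  have hexp : Real.exp (-(ε/3)) ≤ A := by
    have h1 : ε/3 + 1 ≤ Real.exp (ε/3) := Real.add_one_le_exp _
    have h2 : Real.exp (-(ε/3)) * Real.exp (ε/3) = 1 := by
      rw [← Real.exp_add, neg_add_cancel, Real.exp_zero]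
    nlinarith [Real.exp_pos (-(ε/3)), Real.exp_pos (ε/3)]
  have hlogA : -(ε/3) ≤ Real.log A := by
    rw [← Real.log_exp (-(ε/3))]
    exact Real.log_le_log (Real.exp_pos _) hexp
  have hlog2 : (0:ℝ) < Real.log 2 := Real.log_pos (by norm_num)
  have hβε : 1 - (1 - ε) = ε := by ring
  have hlog1ε : Real.log (1 - ε) ≤ 0 := Real.log_nonpos (by linarith) (by linarith)
  have hbinH : binH (1 - ε) = (-(1 - ε) * Real.log (1 - ε) - ε * Real.log ε) / Real.log 2 := by
    rw [binH, hβε, Real.logb, Real.logb]; ring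
  have key : 0 < (-(1 - ε) * Real.log (1 - ε) - ε * Real.log ε) + r * Real.log A := by
    have h1 : r * (-(ε/3)) ≤ r * Real.log A := mul_le_mul_of_nonneg_left hlogA hr.le
    have h2 : 0 ≤ -(1 - ε) * Real.log (1 - ε) := by nlinarith
    rw [hlogε]
    nlinarith
  have heq : (-(1 - ε) * Real.log (1 - ε) - ε * Real.log ε) / Real.log 2
      + r * (Real.log A / Real.log 2)
      = ((-(1 - ε) * Real.log (1 - ε) - ε * Real.log ε) + r * Real.log A) / Real.log 2 := by
    ring
  rw [hbinH, Real.logb, heq]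
  exact div_pos key hlog2
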